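/- Let Σ be a nonempty finite alphabet and L ⊆ Σ* a nonempty finite language. If a 1QFAC over Σ with k classical states recognizes L with cut-point λ isolated by ε for some λ ∈ (0,1) and ε > 0, then k ≥ max_{x∈L}|x| + 2, where |x| denotes the length of the string x. -/

import Mathlib

noncomputable section

/-- The `n`-dimensional complex Hilbert space `ℂⁿ`. -/
abbrev QState (n : ℕ) := EuclideanSpace ℂ (Fin n)

/-- Apply a matrix to a vector of `ℂⁿ`. -/
def mApply {n : ℕ} (M : Matrix (Fin n) (Fin n) ℂ) (v : QState n) : QState n :=
  Matrix.toEuclideanLin M v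

/-- Myhill–Nerode equivalence: `x ≡_L y` iff `∀ z, xz ∈ L ↔ yz ∈ L`. -/
def mnEquiv {α : Type} (L : Set (List α)) (x y : List α) : Prop :=
  ∀ z : List α, x ++ z ∈ L ↔ y ++ z ∈ L

/-- Myhill–Nerode equivalence as a setoid. -/
def mnSetoid {α : Type} (L : Set (List α)) : Setoid (List α) where
  r := mnEquiv L
  iseqv := ⟨fun _ _ => Iff.rfl, fun h z => (h z).symm, fun h1 h2 z => (h1 z).trans (h2 z)⟩

/-- A 1QFAC: classical states `S` with initial state and transitions, an `n`-dimensional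
quantum part with a unit initial vector, a unitary for each (classical state, letter),
and an orthogonal projection (accepting measurement) for each classical state. -/
structure QFAC (Alph : Type) (S : Type) (n : ℕ) where
  s0 : S
  tr : S → Alph → S
  ψ0 : QState n
  ψ0_unit : ‖ψ0‖ = 1
  U : S → Alph → Matrix (Fin n) (Fin n) ℂ
  U_unitary : ∀ s σ, U s σ ∈ Matrix.unitaryGroup (Fin n) ℂ
  P : S → Matrix (Fin n) (Fin n) ℂ
  P_proj : ∀ s, (P s).conjTranspose = P s ∧ P s * P s = P s

namespace QFAC
variable {Alph S : Type} {n : ℕ}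

/-- `s_x`: the classical state reached after reading `x`. -/
def sState (A : QFAC Alph S n) (x : List Alph) : S := x.foldl A.tr A.s0

/-- `|ψ_x⟩`: the final quantum state after reading `x`. -/
def qState (A : QFAC Alph S n) (x : List Alph) : QState n :=
  (x.foldl (fun p σ => (A.tr p.1 σ, mApply (A.U p.1 σ) p.2)) (A.s0, A.ψ0)).2

/-- Acceptance probability `‖P_{s_x,acc}|ψ_x⟩‖²`. -/
def probAcc (A : QFAC Alph S n) (x : List Alph) : ℝ :=
  ‖mApply (A.P (A.sState x)) (A.qState x)‖ ^ 2

/-- Recognition with cut-point `lam` isolated by `ε`. -/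
def Recognizes (A : QFAC Alph S n) (L : Set (List Alph)) (lam ε : ℝ) : Prop :=
  (∀ x ∈ L, lam + ε ≤ A.probAcc x) ∧ (∀ x ∉ L, A.probAcc x ≤ lam - ε)

end QFAC


/-! ### Auxiliary lemmas -/

lemma mApply_one' {n : ℕ} (v : QState n) : mApply 1 v = v := by
  simp [mApply, Matrix.toEuclideanLin_apply]

lemma mApply_mul' {n : ℕ} (M N : Matrix (Fin n) (Fin n) ℂ) (v : QState n) :
    mApply (M * N) v = mApply M (mApply N v) := by
  simp [mApply, Matrix.toEuclideanLin_apply, Matrix.mulVec_mulVec]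

lemma mApply_sub' {n : ℕ} (M : Matrix (Fin n) (Fin n) ℂ) (y z : QState n) :
    mApply M (y - z) = mApply M y - mApply M z := map_sub (Matrix.toEuclideanLin M) y z

lemma mApply_norm' {n : ℕ} (M : Matrix (Fin n) (Fin n) ℂ)
    (hM : M ∈ Matrix.unitaryGroup (Fin n) ℂ) (v : QState n) : ‖mApply M v‖ = ‖v‖ := by
  have h1 : (star M) * M = 1 := hM.1
  rw [Matrix.star_eq_conjTranspose] at h1
  have h2 : (inner ℂ (mApply M v) (mApply M v) : ℂ) = inner ℂ v v := by
    calc (inner ℂ (mApply M v) (mApply M v) : ℂ)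
        = inner ℂ (LinearMap.adjoint (Matrix.toEuclideanLin M) (Matrix.toEuclideanLin M v)) v := by
          rw [LinearMap.adjoint_inner_left]; rfl
      _ = inner ℂ v v := by
          rw [← Matrix.toEuclideanLin_conjTranspose_eq_adjoint M]
          show (inner ℂ (mApply M.conjTranspose (mApply M v)) v : ℂ) = _
          rw [← mApply_mul', h1, mApply_one']
  rw [@norm_eq_sqrt_re_inner ℂ, @norm_eq_sqrt_re_inner ℂ, h2]

lemma mApply_iterate_zero' {n : ℕ} (M : Matrix (Fin n) (Fin n) ℂ) (k : ℕ) :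
    (mApply M)^[k] (0 : QState n) = 0 := by
  induction k with
  | zero => rfl
  | succ k ih =>
      rw [Function.iterate_succ_apply', ih]
      exact map_zero (Matrix.toEuclideanLin M)

lemma iterate_norm_sub' {n : ℕ} (M : Matrix (Fin n) (Fin n) ℂ)
    (hM : M ∈ Matrix.unitaryGroup (Fin n) ℂ) (k : ℕ) (y z : QState n) :
    ‖(mApply M)^[k] y - (mApply M)^[k] z‖ = ‖y - z‖ := by
  induction k generalizing y z with
  | zero => simp
  | succ k ih =>
    rw [Function.iterate_succ_apply, Function.iterate_succ_apply, ih, ← mApply_sub',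
      mApply_norm' M hM]

lemma exists_iterate_close' {n : ℕ} (M : Matrix (Fin n) (Fin n) ℂ)
    (hM : M ∈ Matrix.unitaryGroup (Fin n) ℂ) (x : QState n) (N : ℕ) (η : ℝ) (hη : 0 < η) :
    ∃ t, N ≤ t ∧ ‖(mApply M)^[t] x - x‖ < η := by
  set T := mApply M with hT
  set g : ℕ → QState n := fun j => T^[j * (N + 1)] x with hg
  have hnorm : ∀ j, ‖g j‖ = ‖x‖ := by
    intro j
    have h := iterate_norm_sub' M hM (j * (N+1)) x 0
    rw [mApply_iterate_zero', sub_zero, sub_zero] at h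
    exact h
  have hball : ∀ j, g j ∈ Metric.closedBall (0 : QState n) ‖x‖ := by
    intro j; simp [Metric.mem_closedBall, dist_eq_norm, hnorm j]
  obtain ⟨l, _, φ, hφ, hconv⟩ :=
    (isCompact_closedBall (0 : QState n) ‖x‖).tendsto_subseq hball
  rw [Metric.tendsto_atTop] at hconv
  obtain ⟨J, hJ⟩ := hconv (η/2) (by positivity)
  have hab : φ J < φ (J+1) := hφ (Nat.lt_succ_self J)
  refine ⟨(φ (J+1) - φ J) * (N+1), ?_, ?_⟩
  · calc N ≤ N + 1 := Nat.le_succ N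
      _ ≤ (φ (J+1) - φ J) * (N+1) := Nat.le_mul_of_pos_left _ (by omega)
  · have key : T^[φ (J+1) * (N+1)] x = T^[φ J * (N+1)] (T^[(φ (J+1) - φ J) * (N+1)] x) := by
      rw [← Function.iterate_add_apply]
      congr 1
      rw [← Nat.add_mul]
      congr 1
      omega
    have h1 : ‖g (φ (J+1)) - g (φ J)‖ < η := by
      have d1 := hJ J (le_refl J)
      have d2 := hJ (J+1) (Nat.le_succ J)
      rw [← dist_eq_norm]
      calc dist (g (φ (J+1))) (g (φ J)) ≤ dist (g (φ (J+1))) l + dist l (g (φ J)) :=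
            dist_triangle _ _ _
        _ < η/2 + η/2 := add_lt_add d2 (by rw [dist_comm]; exact d1)
        _ = η := by ring
    have h2 : ‖g (φ (J+1)) - g (φ J)‖ = ‖T^[(φ (J+1) - φ J) * (N+1)] x - x‖ := by
      show ‖T^[φ (J+1) * (N+1)] x - T^[φ J * (N+1)] x‖ = _
      rw [key]
      exact iterate_norm_sub' M hM (φ J * (N+1)) _ x
    rwa [h2] at h1

namespace QFAC
variable {Alph S : Type} {n : ℕ}

/-- Product of unitaries along the classical path, starting from state `s`. -/
def pathU (A : QFAC Alph S n) : S → List Alph → Matrix (Fin n) (Fin n) ℂ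
  | _, [] => 1
  | s, σ :: t => pathU A (A.tr s σ) t * A.U s σ

lemma pathU_unitary (A : QFAC Alph S n) (x : List Alph) (s : S) :
    A.pathU s x ∈ Matrix.unitaryGroup (Fin n) ℂ := by
  induction x generalizing s with
  | nil => exact one_mem _
  | cons σ t ih => exact mul_mem (ih (A.tr s σ)) (A.U_unitary s σ)

lemma foldl_pair (A : QFAC Alph S n) (x : List Alph) (s : S) (φ : QState n) :
    x.foldl (fun p σ => (A.tr p.1 σ, mApply (A.U p.1 σ) p.2)) (s, φ)
      = (x.foldl A.tr s, mApply (A.pathU s x) φ) := by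
  induction x generalizing s φ with
  | nil => simp [pathU, mApply_one']
  | cons σ t ih =>
      simp only [List.foldl_cons]
      rw [ih]
      simp [pathU, mApply_mul']

lemma qState_eq (A : QFAC Alph S n) (x : List Alph) :
    A.qState x = mApply (A.pathU A.s0 x) A.ψ0 := by
  rw [qState, foldl_pair]

lemma sState_append (A : QFAC Alph S n) (a b : List Alph) :
    A.sState (a ++ b) = b.foldl A.tr (A.sState a) := by
  rw [sState, sState, List.foldl_append]

lemma pathU_append (A : QFAC Alph S n) (a b : List Alph) (s : S) (φ : QState n) :
    mApply (A.pathU s (a ++ b)) φ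
      = mApply (A.pathU (a.foldl A.tr s) b) (mApply (A.pathU s a) φ) := by
  induction a generalizing s φ with
  | nil => simp [pathU, mApply_one']
  | cons σ t ih =>
      simp only [List.cons_append, pathU, List.foldl_cons, mApply_mul']
      exact ih (A.tr s σ) (mApply (A.U s σ) φ)

lemma qState_append (A : QFAC Alph S n) (a b : List Alph) :
    A.qState (a ++ b) = mApply (A.pathU (A.sState a) b) (A.qState a) := by
  rw [qState_eq, qState_eq, pathU_append, sState]

/-- `v` repeated `t` times. -/
def rep (t : ℕ) (v : List Alph) : List Alph := (List.replicate t v).flatten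

lemma rep_succ (t : ℕ) (v : List Alph) : rep (t+1) v = v ++ rep t v := by
  simp [rep, List.replicate_succ]

lemma rep_length (t : ℕ) (v : List Alph) : (rep t v).length = t * v.length := by
  induction t with
  | zero => simp [rep]
  | succ t ih => rw [rep_succ, List.length_append, ih]; ring

lemma foldl_rep (A : QFAC Alph S n) (v : List Alph) (s : S) (hs : v.foldl A.tr s = s) (t : ℕ) :
    (rep t v).foldl A.tr s = s := by
  induction t with
  | zero => simp [rep]
  | succ t ih => rw [rep_succ, List.foldl_append, hs, ih]

lemma pathU_rep (A : QFAC Alph S n) (v : List Alph) (s : S) (hs : v.foldl A.tr s = s)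
    (t : ℕ) (φ : QState n) :
    mApply (A.pathU s (rep t v)) φ = (mApply (A.pathU s v))^[t] φ := by
  induction t generalizing φ with
  | zero => simp [rep, pathU, mApply_one']
  | succ t ih =>
      rw [rep_succ, pathU_append, hs, ih, ← Function.iterate_succ_apply]

/-- The pumping contradiction: a nonempty classical loop after `u`, with `u ++ w` accepted,
contradicts recognition of a finite language with isolated cut-point. -/
lemma pump (A : QFAC Alph S n) (L : Set (List Alph)) (hLfin : L.Finite)
    (lam ε : ℝ) (hε : 0 < ε) (hrec : A.Recognizes L lam ε)
    (u v w : List Alph) (hv : v ≠ []) (hs : A.sState (u ++ v) = A.sState u)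
    (hm : u ++ w ∈ L) : False := by
  set s := A.sState u with hsdef
  have hloop : v.foldl A.tr s = s := by rw [← sState_append]; exact hs
  set f : QState n → ℝ :=
    fun φ => ‖mApply (A.P (A.sState (u ++ w))) (mApply (A.pathU s w) φ)‖ ^ 2 with hf
  have hfcont : Continuous f := by
    apply Continuous.pow
    apply Continuous.norm
    exact (LinearMap.continuous_of_finiteDimensional
        (Matrix.toEuclideanLin (A.P (A.sState (u ++ w))))).comp
      (LinearMap.continuous_of_finiteDimensional (Matrix.toEuclideanLin (A.pathU s w)))
  set ψu := A.qState u with hψu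
  set T := mApply (A.pathU s v) with hTd
  have hprob : ∀ t : ℕ, A.probAcc (u ++ (rep t v ++ w)) = f (T^[t] ψu) := by
    intro t
    have hst : A.sState (u ++ (rep t v ++ w)) = A.sState (u ++ w) := by
      rw [sState_append, List.foldl_append, foldl_rep A v s hloop, sState_append]
    have hqt : A.qState (u ++ (rep t v ++ w)) = mApply (A.pathU s w) (T^[t] ψu) := by
      rw [qState_append, ← hsdef, pathU_append, foldl_rep A v s hloop,
        pathU_rep A v s hloop]
    rw [probAcc, hst, hqt]
  have hfψu : lam + ε ≤ f ψu := by
    have : A.probAcc (u ++ w) = f ψu := by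
      rw [probAcc, qState_append]
    rw [← this]
    exact hrec.1 _ hm
  obtain ⟨Mb, hMb⟩ : ∃ Mb : ℕ, ∀ y ∈ L, y.length ≤ Mb := by
    obtain ⟨Mb, hMb⟩ := (hLfin.image List.length).bddAbove
    exact ⟨Mb, fun y hy => hMb ⟨y, hy, rfl⟩⟩
  obtain ⟨δ, hδpos, hδ⟩ := Metric.continuous_iff.mp hfcont ψu (2*ε) (by positivity)
  obtain ⟨t, ht, hclose⟩ := exists_iterate_close' (A.pathU s v)
    (A.pathU_unitary v s) ψu (Mb + 1) δ hδpos
  have hnotin : u ++ (rep t v ++ w) ∉ L := by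
    intro hin
    have := hMb _ hin
    have hlen : t ≤ (u ++ (rep t v ++ w)).length := by
      have hv1 : 1 ≤ v.length := by
        cases v with
        | nil => exact absurd rfl hv
        | cons a b => simp
      calc t = t * 1 := (mul_one t).symm
        _ ≤ t * v.length := Nat.mul_le_mul_left t hv1
        _ = (rep t v).length := (rep_length t v).symm
        _ ≤ (u ++ (rep t v ++ w)).length := by simp; omega
    omega
  have hle : f (T^[t] ψu) ≤ lam - ε := by
    rw [← hprob]
    exact hrec.2 _ hnotin
  have hd : dist (f (T^[t] ψu)) (f ψu) < 2*ε := by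
    apply hδ
    rw [dist_eq_norm]
    exact hclose
  rw [Real.dist_eq, abs_lt] at hd
  linarith [hd.1]

end QFAC

/-- If a 1QFAC with `k` classical states recognizes a nonempty finite
language `L` with isolated cut-point, then `k ≥ max_{x∈L}|x| + 2`. -/
theorem stmt_7 {Alph S : Type} [Fintype Alph] [Nonempty Alph] [Fintype S] {n k : ℕ}
    (hk : Fintype.card S = k)
    (L : Set (List Alph)) (hLfin : L.Finite) (hLne : L.Nonempty)
    (A : QFAC Alph S n) (lam ε : ℝ) (hlam : 0 < lam ∧ lam < 1) (hε : 0 < ε)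
    (hrec : A.Recognizes L lam ε) :
    ∀ x ∈ L, x.length + 2 ≤ k := by
  intro x hx
  classical
  obtain ⟨σ0⟩ := ‹Nonempty Alph›
  set m := x.length with hm
  set g : ℕ → S := fun i => if i ≤ m then A.sState (x.take i) else A.sState (x ++ [σ0])
    with hg
  have key : ∀ i j : ℕ, i < j → j ≤ m + 1 → g i = g j → False := by
    intro i j hij hjm heq
    rcases Nat.lt_or_ge j (m+1) with hjle | hje
    · -- `j ≤ m` : both are prefixes of `x`
      have hjm' : j ≤ m := by omega
      have him' : i ≤ m := by omega
      set u := x.take i with hu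
      set v := (x.take j).drop i with hv
      have huv : u ++ v = x.take j := by
        have : x.take i = (x.take j).take i := by
          rw [List.take_take, Nat.min_eq_left (le_of_lt hij)]
        rw [hu, hv, this]
        exact List.take_append_drop i (x.take j)
      have hvne : v ≠ [] := by
        apply List.ne_nil_of_length_pos
        rw [hv, List.length_drop, List.length_take]
        omega
      have hseq : A.sState (u ++ v) = A.sState u := by
        rw [huv, hu]
        have h1 : g i = A.sState (x.take i) := by rw [hg]; simp [him']
        have h2 : g j = A.sState (x.take j) := by rw [hg]; simp [hjm']
        rw [← h1, ← h2, heq]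
      exact A.pump L hLfin lam ε hε hrec u v (x.drop i) hvne hseq
        (by rw [hu, List.take_append_drop]; exact hx)
    · -- `j = m + 1`
      have hje' : j = m + 1 := by omega
      have him' : i ≤ m := by omega
      have h1 : g i = A.sState (x.take i) := by rw [hg]; simp [him']
      have h2 : g j = A.sState (x ++ [σ0]) := by rw [hg]; simp [hje']
      have heq' : A.sState (x.take i) = A.sState (x ++ [σ0]) := by
        rw [← h1, ← h2, heq]
      have hseq : A.sState (x ++ (σ0 :: x.drop i)) = A.sState x := by
        rw [List.append_cons, QFAC.sState_append, ← heq', ← QFAC.sState_append,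
          List.take_append_drop]
      exact A.pump L hLfin lam ε hε hrec x (σ0 :: x.drop i) [] (by simp) hseq
        (by rw [List.append_nil]; exact hx)
  have hinj : Function.Injective (fun i : Fin (m+2) => g i) := by
    intro i j hij
    by_contra hne
    have hne' : (i : ℕ) ≠ (j : ℕ) := fun h => hne (Fin.ext h)
    rcases Nat.lt_or_ge (i : ℕ) (j : ℕ) with h | h
    · exact key i j h (by omega) hij
    · exact key j i (by omega) (by omega) hij.symm
  have := Fintype.card_le_of_injective _ hinj
  rw [Fintype.card_fin] at this
  omega


end
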